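/- Let N ≥ 2, let Γ be a set of N nonnegative integers containing 0, and let s be a real number with -N/2 < s < -N/2 + 1 such that 2s is not an integer. Then the generalized Vandermonde matrix with entries (s+j)^{γ_i}, j = 0,...,N-1, γ_i ∈ Γ, is invertible. -/

import Mathlib

open Polynomial Finset Set

/-- The "Rolle companion" of `p` relative to exponent `m`: `X * p' - m • p`. -/
private lemma coeff_companion (p : Polynomial ℝ) (m n : ℕ) :
    (Polynomial.X * Polynomial.derivative p - (Polynomial.C (m : ℝ)) * p).coeff n
      = ((n : ℝ) - m) * p.coeff n := by
  rcases n with _ | n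
  · simp [Polynomial.coeff_X_mul_zero, Polynomial.mul_coeff_zero]
  · simp [Polynomial.coeff_X_mul, Polynomial.coeff_derivative]
    ring

/-- IVT helper: a continuous polynomial with opposite signs at the endpoints has a root between. -/
private lemma poly_root_of_sign_change (p : Polynomial ℝ) {a b : ℝ} (hab : a < b)
    (h : p.eval a * p.eval b < 0) : ∃ ξ ∈ Set.Ioo a b, p.eval ξ = 0 := by
  have hc : ContinuousOn (fun x => p.eval x) (Set.Icc a b) :=
    (Polynomial.continuous p).continuousOn
  rcases mul_neg_iff.mp h with ⟨ha, hb⟩ | ⟨ha, hb⟩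
  · obtain ⟨ξ, hξ, hξ0⟩ := intermediate_value_Ioo' hab.le hc (⟨hb, ha⟩ :
      (0:ℝ) ∈ Set.Ioo (p.eval b) (p.eval a))
    exact ⟨ξ, hξ, hξ0⟩
  · obtain ⟨ξ, hξ, hξ0⟩ := intermediate_value_Ioo hab.le hc (a := a) (b := b) ⟨ha, hb⟩
    exact ⟨ξ, hξ, hξ0⟩

/-- A nonzero real polynomial with `k` monomials has fewer than `k` distinct positive roots. -/
private lemma card_lt_card_support (n : ℕ) : ∀ (p : Polynomial ℝ), p ≠ 0 →
    ∀ (S : Finset ℝ), S.card = n → (∀ x ∈ S, 0 < x ∧ p.eval x = 0) →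
    S.card < p.support.card := by
  induction n using Nat.strong_induction_on with
  | _ n IH =>
    intro p hp S hcard hS
    classical
    rcases Finset.eq_empty_or_nonempty S with rfl | hne
    · simpa [Finset.card_pos] using Polynomial.support_nonempty.mpr hp
    -- the companion polynomial
    set m := p.natTrailingDegree with hm
    set r : Polynomial ℝ := Polynomial.X * Polynomial.derivative p - Polynomial.C (m:ℝ) * p
      with hr
    have hrcoeff : ∀ k, r.coeff k = ((k : ℝ) - m) * p.coeff k := coeff_companion p m
    have hrsupp : r.support ⊆ p.support.erase m := by
      intro k hk
      rw [Polynomial.mem_support_iff] at hk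
      rw [hrcoeff] at hk
      rcases mul_ne_zero_iff.mp hk with ⟨h1, h2⟩
      refine Finset.mem_erase.mpr ⟨?_, Polynomial.mem_support_iff.mpr h2⟩
      intro hkm; apply h1; rw [hkm]; ring
    by_cases hr0 : r = 0
    · -- then p is a monomial, with no positive roots; but S is nonempty
      exfalso
      obtain ⟨x, hx⟩ := hne
      obtain ⟨hxpos, hxroot⟩ := hS x hx
      have hmono : ∀ k, k ≠ m → p.coeff k = 0 := by
        intro k hk
        have := hrcoeff k
        rw [hr0] at this
        simp only [Polynomial.coeff_zero] at this
        have h1 : ((k:ℝ) - m) ≠ 0 := by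
          intro h; apply hk
          exact_mod_cast sub_eq_zero.mp h
        exact (mul_eq_zero.mp this.symm).resolve_left h1
      have hpeq : p = Polynomial.C (p.coeff m) * Polynomial.X ^ m := by
        ext k
        by_cases hk : k = m
        · subst hk; simp
        · simp [hmono k hk, Polynomial.coeff_C_mul, Polynomial.coeff_X_pow, hk]
      have hcm : p.coeff m ≠ 0 := by
        intro h; exact hp (by rw [hpeq, h]; simp)
      rw [hpeq] at hxroot
      simp only [Polynomial.eval_mul, Polynomial.eval_C, Polynomial.eval_pow,
        Polynomial.eval_X] at hxroot
      exact (mul_ne_zero hcm (pow_ne_zero _ hxpos.ne')) hxroot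
    · -- Rolle step: between consecutive roots of p there is a positive root of r
      have hmS : m ∈ p.support := Polynomial.natTrailingDegree_mem_support_of_nonzero hp
      set mn := S.min' hne with hmn
      set S' := S.erase mn with hS'
      set pred : ℝ → ℝ := fun b =>
        if h : (S.filter (fun a => a < b)).Nonempty then (S.filter (fun a => a < b)).max' h
        else 0 with hpred
      have hpredb : ∀ b ∈ S', pred b ∈ S ∧ pred b < b ∧ ∀ a ∈ S, a < b → a ≤ pred b := by
        intro b hb
        have hbS : b ∈ S := Finset.mem_of_mem_erase hb
        have hmnb : mn < b := by
          rcases lt_or_eq_of_le (S.min'_le b hbS) with h | h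
          · exact h
          · exact absurd h.symm (Finset.ne_of_mem_erase hb)
        have hnef : (S.filter (fun a => a < b)).Nonempty :=
          ⟨mn, Finset.mem_filter.mpr ⟨S.min'_mem hne, hmnb⟩⟩
        have h1 : pred b ∈ S.filter (fun a => a < b) := by
          rw [hpred]; simp only [hnef, dif_pos]; exact Finset.max'_mem _ _
        refine ⟨(Finset.mem_filter.mp h1).1, (Finset.mem_filter.mp h1).2, ?_⟩
        intro a ha hab
        rw [hpred]; simp only [hnef, dif_pos]
        exact Finset.le_max' (S.filter (fun x => x < b)) a (Finset.mem_filter.mpr ⟨ha, hab⟩)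
      -- Rolle: a root of r in each gap
      have hroll : ∀ b ∈ S', ∃ ξ, ξ ∈ Set.Ioo (pred b) b ∧ r.eval ξ = 0 := by
        intro b hb
        obtain ⟨haS, hab, -⟩ := hpredb b hb
        have hbS : b ∈ S := Finset.mem_of_mem_erase hb
        obtain ⟨hapos, haroot⟩ := hS _ haS
        obtain ⟨hbpos, hbroot⟩ := hS _ hbS
        set f : ℝ → ℝ := fun x => p.eval x / x ^ m with hf
        have hfc : ContinuousOn f (Set.Icc (pred b) b) := by
          apply ContinuousOn.div
          · exact (Polynomial.continuous p).continuousOn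
          · exact (continuous_pow m).continuousOn
          · intro x hx
            exact pow_ne_zero _ (lt_of_lt_of_le hapos hx.1).ne'
        have hfI : f (pred b) = f b := by
          rw [hf]; simp only [haroot, hbroot, zero_div]
        have hff' : ∀ x ∈ Set.Ioo (pred b) b,
            HasDerivAt f (r.eval x / x ^ (m+1)) x := by
          intro x hx
          have hxpos : 0 < x := lt_trans hapos hx.1
          have h1 : HasDerivAt (fun x => p.eval x) (p.derivative.eval x) x :=
            p.hasDerivAt x
          have h2 : HasDerivAt (fun x : ℝ => x ^ m) ((m:ℝ) * x ^ (m-1)) x :=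
            hasDerivAt_pow m x
          have h3 := h1.div h2 (pow_ne_zero _ hxpos.ne')
          refine h3.congr_deriv (Eq.symm ?_)
          have hrx : r.eval x = x * p.derivative.eval x - (m:ℝ) * p.eval x := by
            rw [hr]; simp
          rw [hrx]
          have hx0 : x ≠ 0 := hxpos.ne'
          rcases m with _ | m'
          · simp only [Nat.cast_zero, zero_mul, sub_zero, pow_zero, pow_one, one_pow, div_one,
              mul_zero]
            rw [pow_one, mul_comm, mul_div_assoc, div_self hx0, mul_one]
          · simp only [Nat.add_sub_cancel]
            field_simp
            ring
        obtain ⟨ξ, hξ, hξ0⟩ := exists_hasDerivAt_eq_zero hab hfc hfI hff'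
        refine ⟨ξ, hξ, ?_⟩
        have hξpos : (0:ℝ) < ξ := lt_trans hapos hξ.1
        exact (div_eq_zero_iff.mp hξ0).resolve_right (pow_ne_zero _ hξpos.ne')
      set g : ℝ → ℝ := fun b =>
        if h : ∃ ξ, ξ ∈ Set.Ioo (pred b) b ∧ r.eval ξ = 0 then h.choose else 0 with hg
      have hgb : ∀ b ∈ S', g b ∈ Set.Ioo (pred b) b ∧ r.eval (g b) = 0 := by
        intro b hb
        have h := hroll b hb
        rw [hg]; simp only [h, dif_pos]
        exact h.choose_spec
      set T := S'.image g with hT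
      have hinj : Set.InjOn g ↑S' := by
        intro b hb b' hb' heq
        simp only [Finset.mem_coe] at hb hb'
        by_contra hbb
        have key : ∀ x ∈ S', ∀ y ∈ S', x < y → g x < g y := by
          intro x hx y hy hxy
          have h1 := (hgb x hx).1
          have h2 := (hgb y hy).1
          have hxS : x ∈ S := Finset.mem_of_mem_erase hx
          have := (hpredb y hy).2.2 x hxS hxy
          exact lt_of_lt_of_le h1.2 (le_trans this h2.1.le)
        rcases lt_or_gt_of_ne hbb with h | h
        · exact (key b hb b' hb' h).ne heq
        · exact (key b' hb' b hb h).ne' heq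
      have hTcard : T.card = S.card - 1 := by
        rw [hT, Finset.card_image_of_injOn hinj, hS',
          Finset.card_erase_of_mem (S.min'_mem hne)]
      have hTprop : ∀ x ∈ T, 0 < x ∧ r.eval x = 0 := by
        intro x hx
        obtain ⟨b, hb, rfl⟩ := Finset.mem_image.mp hx
        obtain ⟨haS, -, -⟩ := hpredb b hb
        exact ⟨lt_trans (hS _ haS).1 (hgb b hb).1.1, (hgb b hb).2⟩
      have hn1 : 1 ≤ n := by
        rw [← hcard]; exact Finset.card_pos.mpr hne
      have hIH := IH (n-1) (by omega) r hr0 T (by rw [hTcard, hcard]) hTprop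
      have hrcard : r.support.card ≤ p.support.card - 1 := by
        calc r.support.card ≤ (p.support.erase m).card := Finset.card_le_card hrsupp
        _ = p.support.card - 1 := Finset.card_erase_of_mem hmS
      have hps : 1 ≤ p.support.card := Finset.card_pos.mpr ⟨m, hmS⟩
      omega

private lemma lemR (p : Polynomial ℝ) (hp : p ≠ 0) (S : Finset ℝ)
    (hS : ∀ x ∈ S, 0 < x ∧ p.eval x = 0) : S.card < p.support.card :=
  card_lt_card_support S.card p hp S rfl hS

/-- Core uniqueness lemma: if `u + σ·v` vanishes at `N` increasing positive points with
alternating signs `σ`, and `u, v` have at most `N` monomials in total, then `u = v = 0`. -/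
private lemma core (N : ℕ) (u v : Polynomial ℝ) (t : ℕ → ℝ)
    (ht : StrictMono t) (htpos : ∀ k, 0 < t k) (ε : ℝ) (hε : ε = 1 ∨ ε = -1)
    (heval : ∀ k, k < N → u.eval (t k) + ε * (-1:ℝ)^k * v.eval (t k) = 0)
    (hcard : u.support.card + v.support.card ≤ N) :
    u = 0 ∧ v = 0 := by
  classical
  set σ : ℕ → ℝ := fun k => ε * (-1:ℝ)^k with hσ
  have hneg1 : ∀ k : ℕ, ((-1:ℝ))^k * (-1)^k = 1 := by
    intro k; rw [← pow_add]; exact Even.neg_one_pow ⟨k, by ring⟩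
  have hσsq : ∀ k, σ k * σ k = 1 := by
    intro k; rcases hε with rfl | rfl <;> simp only [hσ] <;>
      rw [mul_mul_mul_comm, hneg1 k] <;> norm_num
  have hσne : ∀ k, σ k ≠ 0 := by
    intro k h
    have := hσsq k; rw [h, mul_zero] at this; norm_num at this
  have hσalt : ∀ k, σ (k+1) = -σ k := by
    intro k; simp only [hσ, pow_succ]; ring
  have hv : ∀ k, k < N → v.eval (t k) = -(σ k) * u.eval (t k) := by
    intro k hk
    have h : u.eval (t k) + σ k * v.eval (t k) = 0 := heval k hk
    have h2 : σ k * u.eval (t k) + (σ k * σ k) * v.eval (t k) = 0 := by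
      linear_combination σ k * h
    rw [hσsq k, one_mul] at h2
    linarith
  -- the case where one of them is zero
  by_cases hu0 : u = 0
  · refine ⟨hu0, ?_⟩
    by_contra hv0
    have hvroots : ∀ k, k < N → v.eval (t k) = 0 := by
      intro k hk
      have := hv k hk
      rw [hu0] at this; simpa using this
    set S := (Finset.range N).image t with hSdef
    have hScard : S.card = N := by
      rw [hSdef, Finset.card_image_of_injOn (ht.injective.injOn), Finset.card_range]
    have := lemR v hv0 S (by
      intro x hx
      obtain ⟨k, hk, rfl⟩ := Finset.mem_image.mp hx
      exact ⟨htpos k, hvroots k (Finset.mem_range.mp hk)⟩)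
    rw [hScard] at this
    simp only [hu0, Polynomial.support_zero, Finset.card_empty, zero_add] at hcard
    omega
  by_cases hv0 : v = 0
  · refine ⟨?_, hv0⟩
    by_contra hu0'
    have huroots : ∀ k, k < N → u.eval (t k) = 0 := by
      intro k hk
      have := heval k hk
      rw [hv0] at this; simpa using this
    set S := (Finset.range N).image t with hSdef
    have hScard : S.card = N := by
      rw [hSdef, Finset.card_image_of_injOn (ht.injective.injOn), Finset.card_range]
    have := lemR u hu0' S (by
      intro x hx
      obtain ⟨k, hk, rfl⟩ := Finset.mem_image.mp hx
      exact ⟨htpos k, huroots k (Finset.mem_range.mp hk)⟩)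
    rw [hScard] at this
    simp only [hv0, Polynomial.support_zero, Finset.card_empty, add_zero] at hcard
    omega
  -- main case: both nonzero, derive a contradiction
  exfalso
  set Z := (Finset.range N).filter (fun k => u.eval (t k) = 0) with hZ
  set G := (Finset.range (N-1)).filter
    (fun k => u.eval (t k) ≠ 0 ∧ u.eval (t (k+1)) ≠ 0) with hG
  have hGmem : ∀ k ∈ G, k + 1 < N ∧ u.eval (t k) ≠ 0 ∧ u.eval (t (k+1)) ≠ 0 := by
    intro k hk
    obtain ⟨h1, h2⟩ := Finset.mem_filter.mp hk
    exact ⟨by have := Finset.mem_range.mp h1; omega, h2⟩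
  have hprod : ∀ k ∈ G,
      (u.eval (t k) * u.eval (t (k+1))) * (v.eval (t k) * v.eval (t (k+1))) < 0 := by
    intro k hk
    obtain ⟨hkN, hu1, hu2⟩ := hGmem k hk
    have e1 : v.eval (t k) = -(σ k) * u.eval (t k) := hv k (by omega)
    have e2 : v.eval (t (k+1)) = -(σ (k+1)) * u.eval (t (k+1)) := hv (k+1) hkN
    have e3 : v.eval (t k) * v.eval (t (k+1)) = -(u.eval (t k) * u.eval (t (k+1))) := by
      rw [e1, e2, hσalt k]
      linear_combination (-(u.eval (t k) * u.eval (t (k+1)))) * (hσsq k)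
    rw [e3]
    have hne : u.eval (t k) * u.eval (t (k+1)) ≠ 0 := mul_ne_zero hu1 hu2
    nlinarith [mul_self_pos.mpr hne]
  set Gu := G.filter (fun k => u.eval (t k) * u.eval (t (k+1)) < 0) with hGu
  set Gv := G.filter (fun k => v.eval (t k) * v.eval (t (k+1)) < 0) with hGv
  have hGsplit : G.card = Gu.card + Gv.card := by
    have hGv' : Gv = G.filter (fun k => ¬ (u.eval (t k) * u.eval (t (k+1)) < 0)) := by
      apply Finset.filter_congr
      intro k hk
      obtain ⟨hkN, hu1, hu2⟩ := hGmem k hk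
      have hp := hprod k hk
      have hune : u.eval (t k) * u.eval (t (k+1)) ≠ 0 := mul_ne_zero hu1 hu2
      constructor
      · intro hvneg hult
        nlinarith
      · intro hnot
        have hupos : 0 < u.eval (t k) * u.eval (t (k+1)) :=
          lt_of_le_of_ne (not_lt.mp hnot) (Ne.symm hune)
        nlinarith
    rw [hGv']
    exact (Finset.card_filter_add_card_filter_not _).symm
  -- pick roots in the gaps
  set gu : ℕ → ℝ := fun k =>
    if h : ∃ ξ ∈ Set.Ioo (t k) (t (k+1)), u.eval ξ = 0 then h.choose else 0 with hgu
  have hguP : ∀ k ∈ Gu, gu k ∈ Set.Ioo (t k) (t (k+1)) ∧ u.eval (gu k) = 0 := by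
    intro k hk
    have hlt := (Finset.mem_filter.mp hk).2
    have h := poly_root_of_sign_change u (ht (lt_add_one k)) hlt
    simp only [hgu, h, dif_pos]
    exact h.choose_spec
  set gv : ℕ → ℝ := fun k =>
    if h : ∃ ξ ∈ Set.Ioo (t k) (t (k+1)), v.eval ξ = 0 then h.choose else 0 with hgv
  have hgvP : ∀ k ∈ Gv, gv k ∈ Set.Ioo (t k) (t (k+1)) ∧ v.eval (gv k) = 0 := by
    intro k hk
    have hlt := (Finset.mem_filter.mp hk).2
    have h := poly_root_of_sign_change v (ht (lt_add_one k)) hlt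
    simp only [hgv, h, dif_pos]
    exact h.choose_spec
  -- root-counting for u and for v
  have hZv : ∀ k ∈ Z, v.eval (t k) = 0 := by
    intro k hk
    obtain ⟨h1, h2⟩ := Finset.mem_filter.mp hk
    rw [hv k (Finset.mem_range.mp h1), h2, mul_zero]
  have hcount : ∀ (p : Polynomial ℝ) (Gp : Finset ℕ) (gp : ℕ → ℝ), p ≠ 0 → Gp ⊆ G →
      (∀ k ∈ Gp, gp k ∈ Set.Ioo (t k) (t (k+1)) ∧ p.eval (gp k) = 0) →
      (∀ k ∈ Z, p.eval (t k) = 0) →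
      Z.card + Gp.card < p.support.card := by
    intro p Gp gp hp hGpG hgpP hZp
    have hinjt : Set.InjOn t ↑Z := ht.injective.injOn
    have hinjg : Set.InjOn gp ↑Gp := by
      intro k hk k' hk' heq
      by_contra hne
      have key : ∀ a ∈ Gp, ∀ b ∈ Gp, a < b → gp a < gp b := by
        intro a ha b hb hab
        have h1 := (hgpP a ha).1
        have h2 := (hgpP b hb).1
        calc gp a < t (a+1) := h1.2
        _ ≤ t b := ht.le_iff_le.mpr (by omega)
        _ < gp b := h2.1
      rcases lt_or_gt_of_ne hne with h | h
      · exact (key _ hk _ hk' h).ne heq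
      · exact (key _ hk' _ hk h).ne' heq
    have hdisj : Disjoint (Z.image t) (Gp.image gp) := by
      rw [Finset.disjoint_left]
      intro x hx1 hx2
      obtain ⟨m, hm, rfl⟩ := Finset.mem_image.mp hx1
      obtain ⟨k, hk, heq⟩ := Finset.mem_image.mp hx2
      have hio := (hgpP k hk).1
      rw [heq] at hio
      rcases le_or_gt m k with h | h
      · exact absurd (ht.le_iff_le.mpr h) (not_le.mpr hio.1)
      · exact absurd (ht.le_iff_le.mpr (by omega : k + 1 ≤ m)) (not_le.mpr hio.2)
    have hcardS : (Z.image t ∪ Gp.image gp).card = Z.card + Gp.card := by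
      rw [Finset.card_union_of_disjoint hdisj, Finset.card_image_of_injOn hinjt,
        Finset.card_image_of_injOn hinjg]
    have := lemR p hp (Z.image t ∪ Gp.image gp) (by
      intro x hx
      rcases Finset.mem_union.mp hx with h | h
      · obtain ⟨m, hm, rfl⟩ := Finset.mem_image.mp h
        exact ⟨htpos m, hZp m hm⟩
      · obtain ⟨k, hk, rfl⟩ := Finset.mem_image.mp h
        exact ⟨lt_trans (htpos k) (hgpP k hk).1.1, (hgpP k hk).2⟩)
    omega
  have hcu := hcount u Gu gu hu0 (Finset.filter_subset _ _) hguP (by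
    intro k hk; exact (Finset.mem_filter.mp hk).2)
  have hcv := hcount v Gv gv hv0 (Finset.filter_subset _ _) hgvP hZv
  -- bad steps
  set B := (Finset.range (N-1)).filter
    (fun k => ¬ (u.eval (t k) ≠ 0 ∧ u.eval (t (k+1)) ≠ 0)) with hB
  have hGB : G.card + B.card = N - 1 := by
    rw [hG, hB]
    rw [Finset.card_filter_add_card_filter_not]
    exact Finset.card_range _
  have hBsub : B ⊆ Z ∪ Z.image (fun k => k - 1) := by
    intro k hk
    obtain ⟨h1, h2⟩ := Finset.mem_filter.mp hk
    have hkN : k < N - 1 := Finset.mem_range.mp h1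
    push_neg at h2
    by_cases hzk : u.eval (t k) = 0
    · exact Finset.mem_union_left _ (Finset.mem_filter.mpr ⟨Finset.mem_range.mpr (by omega), hzk⟩)
    · have hzk1 : u.eval (t (k+1)) = 0 := h2 hzk
      refine Finset.mem_union_right _ (Finset.mem_image.mpr ⟨k+1, ?_, by omega⟩)
      exact Finset.mem_filter.mpr ⟨Finset.mem_range.mpr (by omega), hzk1⟩
  have hBcard : B.card ≤ 2 * Z.card := by
    calc B.card ≤ (Z ∪ Z.image (fun k => k - 1)).card := Finset.card_le_card hBsub
    _ ≤ Z.card + (Z.image (fun k => k - 1)).card := Finset.card_union_le _ _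
    _ ≤ Z.card + Z.card := by
        have := Finset.card_image_le (s := Z) (f := fun k => k - 1)
        omega
    _ = 2 * Z.card := by ring
  have hN1 : 1 ≤ N := by
    have : 1 ≤ u.support.card := Finset.card_pos.mpr (Polynomial.support_nonempty.mpr hu0)
    omega
  omega

private lemma det_aux (N : ℕ) (γ : Fin N → ℕ) (hγinj : Function.Injective γ)
    (x : Fin N → ℝ) (c : Fin N → ℝ)
    (hc : ∀ j : Fin N, ∑ i, c i * x j ^ γ i = 0)
    (t : ℕ → ℝ) (ht : StrictMono t) (htpos : ∀ k, 0 < t k)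
    (ε : ℝ) (hε : ε = 1 ∨ ε = -1)
    (hnode : ∀ k, k < N → ∃ j : Fin N, x j = ε * (-1:ℝ)^k * t k) :
    c = 0 := by
  classical
  set E := Finset.univ.filter (fun i : Fin N => Even (γ i)) with hE
  set O := Finset.univ.filter (fun i : Fin N => ¬ Even (γ i)) with hO
  set u : Polynomial ℝ := ∑ i ∈ E, Polynomial.C (c i) * Polynomial.X ^ (γ i) with hu
  set v : Polynomial ℝ := ∑ i ∈ O, Polynomial.C (c i) * Polynomial.X ^ (γ i) with hv
  have hcoeff : ∀ (S : Finset (Fin N)) (i : Fin N), i ∈ S →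
      (∑ j ∈ S, Polynomial.C (c j) * Polynomial.X ^ (γ j)).coeff (γ i) = c i := by
    intro S i hi
    rw [Polynomial.finset_sum_coeff]
    rw [Finset.sum_eq_single i]
    · simp [Polynomial.coeff_C_mul, Polynomial.coeff_X_pow]
    · intro j hj hji
      simp only [Polynomial.coeff_C_mul, Polynomial.coeff_X_pow]
      have : γ j ≠ γ i := fun h => hji (hγinj h)
      rw [if_neg (fun h => this h.symm), mul_zero]
    · intro h; exact absurd hi h
  have hsupp : ∀ (S : Finset (Fin N)),
      (∑ j ∈ S, Polynomial.C (c j) * Polynomial.X ^ (γ j)).support.card ≤ S.card := by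
    intro S
    have h1 : (∑ j ∈ S, Polynomial.C (c j) * Polynomial.X ^ (γ j)).support ⊆ S.image γ := by
      intro n hn
      rw [Polynomial.mem_support_iff, Polynomial.finset_sum_coeff] at hn
      obtain ⟨j, hj, hne⟩ := Finset.exists_ne_zero_of_sum_ne_zero hn
      have hnγ : n = γ j := by
        by_contra h
        apply hne
        rw [Polynomial.coeff_C_mul, Polynomial.coeff_X_pow, if_neg h, mul_zero]
      exact Finset.mem_image.mpr ⟨j, hj, hnγ.symm⟩
    exact le_trans (Finset.card_le_card h1) (Finset.card_image_le)
  have hueval : ∀ y : ℝ, u.eval y = ∑ i ∈ E, c i * y ^ (γ i) := by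
    intro y; rw [hu, Polynomial.eval_finset_sum]; simp
  have hveval : ∀ y : ℝ, v.eval y = ∑ i ∈ O, c i * y ^ (γ i) := by
    intro y; rw [hv, Polynomial.eval_finset_sum]; simp
  have heval : ∀ k, k < N → u.eval (t k) + ε * (-1:ℝ)^k * v.eval (t k) = 0 := by
    intro k hk
    obtain ⟨j, hj⟩ := hnode k hk
    have hsg1 : ε * (-1:ℝ)^k = 1 ∨ ε * (-1:ℝ)^k = -1 := by
      rcases hε with rfl | rfl <;> rcases neg_one_pow_eq_or ℝ k with h | h <;> rw [h] <;>
        norm_num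
    have hxj : ∀ i : Fin N, x j ^ γ i = (ε * (-1:ℝ)^k) ^ (γ i) * t k ^ γ i := by
      intro i; rw [hj, mul_pow]
    have hevenpow : ∀ i ∈ E, c i * x j ^ γ i = c i * t k ^ γ i := by
      intro i hi
      have hEi : Even (γ i) := (Finset.mem_filter.mp hi).2
      rw [hxj i]
      rcases hsg1 with h | h <;> rw [h]
      · rw [one_pow, one_mul]
      · rw [hEi.neg_one_pow, one_mul]
    have hoddpow : ∀ i ∈ O, c i * x j ^ γ i = (ε * (-1:ℝ)^k) * (c i * t k ^ γ i) := by
      intro i hi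
      have hOi : ¬ Even (γ i) := (Finset.mem_filter.mp hi).2
      rw [Nat.not_even_iff_odd] at hOi
      rw [hxj i]
      rcases hsg1 with h | h <;> rw [h]
      · rw [one_pow]; ring
      · rw [hOi.neg_one_pow]; ring
    have hsplit := Finset.sum_filter_add_sum_filter_not Finset.univ
      (fun i : Fin N => Even (γ i)) (fun i => c i * x j ^ γ i)
    rw [hc j] at hsplit
    rw [hueval, hveval, Finset.mul_sum]
    calc (∑ i ∈ E, c i * t k ^ γ i) + ∑ i ∈ O, ε * (-1:ℝ)^k * (c i * t k ^ γ i)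
        = (∑ i ∈ E, c i * x j ^ γ i) + ∑ i ∈ O, c i * x j ^ γ i := by
          congr 1
          · exact (Finset.sum_congr rfl hevenpow).symm
          · refine Finset.sum_congr rfl ?_
            intro i hi
            exact (hoddpow i hi).symm
    _ = 0 := hsplit
  have hcard : u.support.card + v.support.card ≤ N := by
    have h1 := hsupp E
    have h2 := hsupp O
    rw [← hu] at h1
    rw [← hv] at h2
    have h3 : E.card + O.card = N := by
      rw [hE, hO, Finset.card_filter_add_card_filter_not, Finset.card_univ,
        Fintype.card_fin]
    omega
  obtain ⟨hu0, hv0⟩ := core N u v t ht htpos ε hε heval hcard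
  funext i
  by_cases hi : Even (γ i)
  · have := hcoeff E i (Finset.mem_filter.mpr ⟨Finset.mem_univ i, hi⟩)
    rw [← hu, hu0] at this
    simpa using this.symm
  · have := hcoeff O i (Finset.mem_filter.mpr ⟨Finset.mem_univ i, hi⟩)
    rw [← hv, hv0] at this
    simpa using this.symm

theorem stmt_7 (N : ℕ) (hN : 2 ≤ N) (s : ℝ)
    (γ : Fin N → ℕ) (hγ : StrictMono γ) (h0 : (0 : ℕ) ∈ Set.range γ)
    (hs1 : -(N : ℝ) / 2 < s) (hs2 : s < -(N : ℝ) / 2 + 1)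
    (hs3 : ¬∃ k : ℤ, 2 * s = (k : ℝ)) :
    (Matrix.of fun i j : Fin N => (s + (j : ℕ)) ^ γ i).det ≠ 0 := by
  classical
  intro hdet
  obtain ⟨c, hc0, hcm⟩ := Matrix.exists_vecMul_eq_zero_iff.mpr hdet
  have hc : ∀ j : Fin N, ∑ i, c i * (s + (j : ℕ)) ^ γ i = 0 := by
    intro j
    have := congrFun hcm j
    simpa [Matrix.vecMul, dotProduct] using this
  have hNR : (2 : ℝ) ≤ (N : ℝ) := by exact_mod_cast hN
  have hspos : 0 < -s := by nlinarith
  set Q : ℕ := ⌈-s⌉₊ with hQdef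
  have hQ1 : (Q : ℝ) < -s + 1 := Nat.ceil_lt_add_one hspos.le
  have hQ2 : -s ≤ (Q : ℝ) := Nat.le_ceil _
  have hQne : (Q : ℝ) ≠ -s := by
    intro h
    exact hs3 ⟨-2 * Q, by push_cast; linarith⟩
  have hQpos : 0 < s + Q := by
    rcases lt_or_eq_of_le hQ2 with h | h
    · linarith
    · exact absurd h.symm hQne
  have hQlt1 : s + Q < 1 := by linarith
  have hd0 : 2 * s + 2 * Q - 1 ≠ 0 := by
    intro h
    exact hs3 ⟨1 - 2 * Q, by push_cast; linarith⟩
  -- bounds relating Q and N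
  have hQupR : (Q : ℝ) < (N : ℝ) / 2 + 1 := by linarith
  have hQloR : (N : ℝ) / 2 - 1 < (Q : ℝ) := by linarith
  have hQup : 2 * Q ≤ N + 1 := by
    have : (2 * Q : ℝ) < (N : ℝ) + 2 := by push_cast; linarith
    exact_mod_cast Nat.lt_succ_iff.mp (by exact_mod_cast this : 2 * Q < N + 2)
  have hQlo : N ≤ 2 * Q + 1 := by
    have : (N : ℝ) < (2 * Q : ℝ) + 2 := by push_cast; linarith
    exact_mod_cast Nat.lt_succ_iff.mp (by exact_mod_cast this : N < 2 * Q + 2)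
  rcases lt_or_gt_of_ne hd0 with hd | hd
  · -- case: smallest modulus node is positive; positive nodes come first
    have hQup' : 2 * Q ≤ N := by
      have : (2 * Q : ℝ) < (N : ℝ) + 1 := by push_cast; linarith
      exact Nat.lt_succ_iff.mp (by exact_mod_cast this)
    set t : ℕ → ℝ := fun k =>
      if k % 2 = 0 then s + Q + (k / 2 : ℕ) else -s - Q + 1 + (k / 2 : ℕ) with htdef
    have ht : StrictMono t := by
      apply strictMono_nat_of_lt_succ
      intro k
      rcases Nat.even_or_odd k with he | ho
      · have h1 : k % 2 = 0 := Nat.even_iff.mp he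
        have h2 : (k + 1) % 2 = 1 := by omega
        have h3 : (k + 1) / 2 = k / 2 := by omega
        simp only [htdef, h1, h2, h3, if_true, if_false]
        norm_num
        linarith
      · have h1 : k % 2 = 1 := Nat.odd_iff.mp ho
        have h2 : (k + 1) % 2 = 0 := by omega
        have h3 : (k + 1) / 2 = k / 2 + 1 := by omega
        simp only [htdef, h1, h2, h3, if_true, if_false]
        norm_num
        push_cast
        linarith
    have htpos : ∀ k, 0 < t k := by
      intro k
      rw [htdef]
      rcases Nat.decEq (k % 2) 0 with h | h
      · simp only [h, if_false]
        have : (0:ℝ) ≤ ((k / 2 : ℕ) : ℝ) := Nat.cast_nonneg _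
        linarith
      · simp only [h, if_true]
        have : (0:ℝ) ≤ ((k / 2 : ℕ) : ℝ) := Nat.cast_nonneg _
        linarith
    have hnode : ∀ k, k < N → ∃ j : Fin N, s + ((j : ℕ) : ℝ) = 1 * (-1:ℝ)^k * t k := by
      intro k hk
      rcases Nat.even_or_odd k with he | ho
      · have h1 : k % 2 = 0 := Nat.even_iff.mp he
        have hjlt : Q + k / 2 < N := by omega
        refine ⟨⟨Q + k / 2, hjlt⟩, ?_⟩
        rw [he.neg_one_pow]
        simp only [htdef, h1, if_true]
        push_cast
        ring
      · have h1 : k % 2 = 1 := Nat.odd_iff.mp ho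
        have hQk : k / 2 + 1 ≤ Q := by omega
        have hjlt : Q - 1 - k / 2 < N := by omega
        refine ⟨⟨Q - 1 - k / 2, hjlt⟩, ?_⟩
        rw [ho.neg_one_pow]
        simp only [htdef, h1, Nat.one_ne_zero, if_false]
        have hcast : ((Q - 1 - k / 2 : ℕ) : ℝ) = (Q : ℝ) - 1 - ((k / 2 : ℕ) : ℝ) := by
          have : Q - 1 - k / 2 + (k / 2 + 1) = Q := by omega
          have h := congrArg (fun n : ℕ => (n : ℝ)) this
          push_cast at h
          linarith
        rw [hcast]
        ring
    have := det_aux N γ hγ.injective (fun j => s + ((j : ℕ) : ℝ)) c hc t ht htpos 1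
      (Or.inl rfl) hnode
    exact hc0 this
  · -- case: smallest modulus node is negative; negative nodes come first
    have hQlo' : N ≤ 2 * Q := by
      have : (N : ℝ) < (2 * Q : ℝ) + 1 := by push_cast; linarith
      exact Nat.lt_succ_iff.mp (by exact_mod_cast this)
    set t : ℕ → ℝ := fun k =>
      if k % 2 = 0 then -s - Q + 1 + (k / 2 : ℕ) else s + Q + (k / 2 : ℕ) with htdef
    have ht : StrictMono t := by
      apply strictMono_nat_of_lt_succ
      intro k
      rcases Nat.even_or_odd k with he | ho
      · have h1 : k % 2 = 0 := Nat.even_iff.mp he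
        have h2 : (k + 1) % 2 = 1 := by omega
        have h3 : (k + 1) / 2 = k / 2 := by omega
        simp only [htdef, h1, h2, h3, if_true, if_false]
        norm_num
        linarith
      · have h1 : k % 2 = 1 := Nat.odd_iff.mp ho
        have h2 : (k + 1) % 2 = 0 := by omega
        have h3 : (k + 1) / 2 = k / 2 + 1 := by omega
        simp only [htdef, h1, h2, h3, if_true, if_false]
        norm_num
        push_cast
        linarith
    have htpos : ∀ k, 0 < t k := by
      intro k
      rw [htdef]
      rcases Nat.decEq (k % 2) 0 with h | h
      · simp only [h, if_false]
        have : (0:ℝ) ≤ ((k / 2 : ℕ) : ℝ) := Nat.cast_nonneg _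
        linarith
      · simp only [h, if_true]
        have : (0:ℝ) ≤ ((k / 2 : ℕ) : ℝ) := Nat.cast_nonneg _
        linarith
    have hnode : ∀ k, k < N → ∃ j : Fin N, s + ((j : ℕ) : ℝ) = (-1) * (-1:ℝ)^k * t k := by
      intro k hk
      rcases Nat.even_or_odd k with he | ho
      · have h1 : k % 2 = 0 := Nat.even_iff.mp he
        have hQk : k / 2 + 1 ≤ Q := by omega
        have hjlt : Q - 1 - k / 2 < N := by omega
        refine ⟨⟨Q - 1 - k / 2, hjlt⟩, ?_⟩
        rw [he.neg_one_pow]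
        simp only [htdef, h1, if_true]
        have hcast : ((Q - 1 - k / 2 : ℕ) : ℝ) = (Q : ℝ) - 1 - ((k / 2 : ℕ) : ℝ) := by
          have : Q - 1 - k / 2 + (k / 2 + 1) = Q := by omega
          have h := congrArg (fun n : ℕ => (n : ℝ)) this
          push_cast at h
          linarith
        rw [hcast]
        ring
      · have h1 : k % 2 = 1 := Nat.odd_iff.mp ho
        have hjlt : Q + k / 2 < N := by omega
        refine ⟨⟨Q + k / 2, hjlt⟩, ?_⟩
        rw [ho.neg_one_pow]
        simp only [htdef, h1, Nat.one_ne_zero, if_false]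
        push_cast
        ring
    have := det_aux N γ hγ.injective (fun j => s + ((j : ℕ) : ℝ)) c hc t ht htpos (-1)
      (Or.inr rfl) hnode
    exact hc0 this
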